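/- Fix an integer p ≥ 3, a constant C > 0 and β > 0, and define ξ₀(r) = r²/2 + (C r)^p/p and, for q ∈ [0,1], F_RS(q,β) = E[log cosh(β·√(ξ₀'(q))·Z)] + (β²/2)·(ξ₀(1) − ξ₀(q) − (1−q)·ξ₀'(q)), where Z is a standard Gaussian random variable. Then F_RS(0,β) = (β²/2)·ξ₀(1), and as q → 0⁺, F_RS(q,β) − F_RS(0,β) = (β²/4)·(1−β²)·q² + o(q²); precisely, (F_RS(q,β) − (β²/2)ξ₀(1) − (β²/4)(1−β²)q²)/q² tends to 0 as q tends to 0 from the right. -/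

import Mathlib

open Real Filter MeasureTheory ProbabilityTheory
open scoped NNReal ENNReal

lemma nonneg_of_deriv (f f' : ℝ → ℝ) (hd : ∀ x, HasDerivAt f (f' x) x) (h0 : f 0 = 0)
    (hge : ∀ x, 0 ≤ x → 0 ≤ f' x) : ∀ x, 0 ≤ x → 0 ≤ f x := by
  intro x hx
  have hm : MonotoneOn f (Set.Ici 0) :=
    monotoneOn_of_deriv_nonneg (convex_Ici 0)
      (fun y _ => (hd y).continuousAt.continuousWithinAt)
      (fun y _ => (hd y).differentiableAt.differentiableWithinAt)
      (fun y hy => by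
        rw [(hd y).deriv]
        exact hge y (le_of_lt (by simpa [interior_Ici] using hy)))
  calc (0:ℝ) = f 0 := h0.symm
  _ ≤ f x := hm Set.self_mem_Ici hx hx

lemma hasDerivAt_T (x : ℝ) :
    HasDerivAt (fun y => Real.sinh y / Real.cosh y) (1 - (Real.sinh x / Real.cosh x)^2) x := by
  have h := (Real.hasDerivAt_sinh x).div (Real.hasDerivAt_cosh x) (Real.cosh_pos x).ne'
  refine h.congr_deriv ?_
  have h2 : Real.cosh x ^ 2 - Real.sinh x ^ 2 = 1 := Real.cosh_sq_sub_sinh_sq x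
  field_simp

lemma T_nonneg (x : ℝ) (hx : 0 ≤ x) : 0 ≤ Real.sinh x / Real.cosh x :=
  div_nonneg (by simpa using Real.sinh_le_sinh.2 hx) (Real.cosh_pos x).le

lemma T_le_self (x : ℝ) (hx : 0 ≤ x) : Real.sinh x / Real.cosh x ≤ x := by
  have := nonneg_of_deriv (fun y => y - Real.sinh y / Real.cosh y)
    (fun y => (Real.sinh y / Real.cosh y)^2)
    (fun y => ((hasDerivAt_id y).sub (hasDerivAt_T y)).congr_deriv (by ring))
    (by simp) (fun y _ => sq_nonneg _) x hx
  linarith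

lemma L1 (x : ℝ) (hx : 0 ≤ x) : x - x^3/3 ≤ Real.sinh x / Real.cosh x := by
  have := nonneg_of_deriv (fun y => Real.sinh y / Real.cosh y - y + y^3/3)
    (fun y => y^2 - (Real.sinh y / Real.cosh y)^2)
    (fun y => by
      have := ((hasDerivAt_T y).sub (hasDerivAt_id y)).add
        ((hasDerivAt_pow 3 y).div_const 3)
      refine this.congr_deriv ?_
      push_cast; ring)
    (by simp) (fun y hy => by
      have h1 := T_le_self y hy
      have h2 := T_nonneg y hy
      nlinarith) x hx
  linarith

lemma L2 (x : ℝ) (hx : 0 ≤ x) :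
    Real.sinh x / Real.cosh x ≤ x - x^3/3 + 2*x^5/15 := by
  have := nonneg_of_deriv
    (fun y => y - y^3/3 + 2*y^5/15 - Real.sinh y / Real.cosh y)
    (fun y => (Real.sinh y / Real.cosh y)^2 - y^2 + 2*y^4/3)
    (fun y => by
      have := (((hasDerivAt_id y).sub ((hasDerivAt_pow 3 y).div_const 3)).add
        (((hasDerivAt_pow 5 y).const_mul 2).div_const 15)).sub (hasDerivAt_T y)
      refine this.congr_deriv ?_
      push_cast; ring)
    (by simp) (fun y hy => by
      show (0:ℝ) ≤ (Real.sinh y / Real.cosh y)^2 - y^2 + 2*y^4/3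
      rcases le_or_gt (y^2) (3/2) with h | h
      · have h1 : 0 ≤ y - y^3/3 := by nlinarith
        have h2 := L1 y hy
        have h3 : (y - y^3/3)^2 ≤ (Real.sinh y / Real.cosh y)^2 :=
          pow_le_pow_left₀ h1 h2 2
        have h4 : (y - y^3/3)^2 = y^2 - 2*y^4/3 + y^6/9 := by ring
        have h5 : (0:ℝ) ≤ y^6 := by positivity
        linarith
      · nlinarith [sq_nonneg (Real.sinh y / Real.cosh y)]) x hx
  linarith

lemma hasDerivAt_logcosh (x : ℝ) :
    HasDerivAt (fun y => Real.log (Real.cosh y)) (Real.sinh x / Real.cosh x) x :=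
  (Real.hasDerivAt_cosh x).log (Real.cosh_pos x).ne'

lemma logcosh_nonneg (x : ℝ) : 0 ≤ Real.log (Real.cosh x) :=
  Real.log_nonneg (Real.one_le_cosh x)

lemma logcosh_le_sq (x : ℝ) : Real.log (Real.cosh x) ≤ x^2/2 := by
  have key : ∀ y, 0 ≤ y → Real.log (Real.cosh y) ≤ y^2/2 := by
    intro y hy
    have := nonneg_of_deriv (fun z => z^2/2 - Real.log (Real.cosh z))
      (fun z => z - Real.sinh z / Real.cosh z)
      (fun z => by
        have := ((hasDerivAt_pow 2 z).div_const 2).sub (hasDerivAt_logcosh z)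
        refine this.congr_deriv ?_; push_cast; ring)
      (by simp) (fun z hz => by
        have := T_le_self z hz; simpa using this) y hy
    linarith
  rcases le_total 0 x with hx | hx
  · exact key x hx
  · have := key (-x) (by linarith)
    simpa using this

lemma logcosh_lb (x : ℝ) : x^2/2 - x^4/12 ≤ Real.log (Real.cosh x) := by
  have key : ∀ y, 0 ≤ y → y^2/2 - y^4/12 ≤ Real.log (Real.cosh y) := by
    intro y hy
    have := nonneg_of_deriv (fun z => Real.log (Real.cosh z) - z^2/2 + z^4/12)
      (fun z => Real.sinh z / Real.cosh z - z + z^3/3)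
      (fun z => by
        have := ((hasDerivAt_logcosh z).sub ((hasDerivAt_pow 2 z).div_const 2)).add
          ((hasDerivAt_pow 4 z).div_const 12)
        refine this.congr_deriv ?_; push_cast; ring)
      (by simp) (fun z hz => by
        have := L1 z hz
        show (0:ℝ) ≤ Real.sinh z / Real.cosh z - z + z^3/3
        linarith) y hy
    linarith
  rcases le_total 0 x with hx | hx
  · exact key x hx
  · have := key (-x) (by linarith)
    rw [Real.cosh_neg] at this
    nlinarith [this]

lemma logcosh_ub (x : ℝ) : Real.log (Real.cosh x) ≤ x^2/2 - x^4/12 + x^6/45 := by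
  have key : ∀ y, 0 ≤ y → Real.log (Real.cosh y) ≤ y^2/2 - y^4/12 + y^6/45 := by
    intro y hy
    have := nonneg_of_deriv
      (fun z => z^2/2 - z^4/12 + z^6/45 - Real.log (Real.cosh z))
      (fun z => z - z^3/3 + 2*z^5/15 - Real.sinh z / Real.cosh z)
      (fun z => by
        have := ((((hasDerivAt_pow 2 z).div_const 2).sub
          ((hasDerivAt_pow 4 z).div_const 12)).add
          ((hasDerivAt_pow 6 z).div_const 45)).sub (hasDerivAt_logcosh z)
        refine this.congr_deriv ?_; push_cast; ring)
      (by simp) (fun z hz => by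
        have := L2 z hz
        show (0:ℝ) ≤ z - z^3/3 + 2*z^5/15 - Real.sinh z / Real.cosh z
        linarith) y hy
    linarith
  rcases le_total 0 x with hx | hx
  · exact key x hx
  · have := key (-x) (by linarith)
    rw [Real.cosh_neg] at this
    nlinarith [this]

lemma integrable_pow_gauss (n : ℕ) :
    Integrable fun x : ℝ => x ^ n * Real.exp (-(1/2) * x ^ 2) := by
  have h := integrable_rpow_mul_exp_neg_mul_sq (b := 1/2) (by norm_num)
    (s := (n : ℝ)) (by exact_mod_cast neg_one_lt_zero.trans_le (Nat.cast_nonneg n))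
  have : ∀ x : ℝ, x ^ (n : ℝ) = x ^ n := fun x => Real.rpow_natCast x n
  simpa [this] using h

lemma tendsto_pow_gauss_atTop (n : ℕ) :
    Tendsto (fun x : ℝ => x ^ n * Real.exp (-(1/2) * x ^ 2)) atTop (nhds 0) := by
  have h := rpow_mul_exp_neg_mul_sq_isLittleO_exp_neg (b := (1/2:ℝ)) (by norm_num) (n : ℝ)
  have h2 : Tendsto (fun x : ℝ => Real.exp (-(1/2) * x)) atTop (nhds 0) :=
    Real.tendsto_exp_atBot.comp (by
      apply Tendsto.const_mul_atTop_of_neg (r := -(1/2:ℝ)) (by norm_num) tendsto_id)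
  have := h.isBigO.trans_tendsto h2
  have heq : ∀ x : ℝ, x ^ (n : ℝ) = x ^ n := fun x => Real.rpow_natCast x n
  simpa [heq] using this

lemma tendsto_pow_gauss_atBot (n : ℕ) :
    Tendsto (fun x : ℝ => x ^ n * Real.exp (-(1/2) * x ^ 2)) atBot (nhds 0) := by
  have h : Tendsto (fun x : ℝ => ((-1:ℝ)) ^ n * (x ^ n * Real.exp (-(1/2) * x ^ 2)))
      atTop (nhds 0) := by
    simpa using (tendsto_pow_gauss_atTop n).const_mul ((-1:ℝ)^n)
  have := h.comp tendsto_neg_atBot_atTop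
  simp only [Function.comp_def] at this
  convert this using 2 with x
  rw [neg_sq, ← mul_assoc, ← mul_pow]
  norm_num

lemma J_rec (n : ℕ) :
    ∫ x : ℝ, x ^ (n+2) * Real.exp (-(1/2) * x ^ 2)
      = (n+1) * ∫ x : ℝ, x ^ n * Real.exp (-(1/2) * x ^ 2) := by
  set f : ℝ → ℝ := fun x => -(x ^ (n+1) * Real.exp (-(1/2) * x ^ 2)) with hf
  set f' : ℝ → ℝ := fun x =>
    x ^ (n+2) * Real.exp (-(1/2) * x ^ 2) - (n+1) * (x ^ n * Real.exp (-(1/2) * x ^ 2)) with hf'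
  have hderiv : ∀ x, HasDerivAt f (f' x) x := by
    intro x
    have he : HasDerivAt (fun x : ℝ => Real.exp (-(1/2) * x ^ 2))
        (-(1/2) * (2 * x) * Real.exp (-(1/2) * x ^ 2)) x := by
      have hinner : HasDerivAt (fun x : ℝ => -(1/2) * x ^ 2) (-(1/2) * (2 * x)) x := by
        simpa using ((hasDerivAt_pow 2 x).const_mul (-(1/2:ℝ)))
      simpa [mul_comm] using hinner.exp
    have := (((hasDerivAt_pow (n+1) x)).mul he).neg
    refine this.congr_deriv ?_
    simp only [hf']
    push_cast
    rw [pow_succ, pow_succ]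
    ring
  have hint : Integrable f' :=
    (integrable_pow_gauss (n+2)).sub ((integrable_pow_gauss n).const_mul _)
  have htop : Tendsto f atTop (nhds 0) := by
    have := (tendsto_pow_gauss_atTop (n+1)).neg
    rw [neg_zero] at this
    exact this
  have hbot : Tendsto f atBot (nhds 0) := by
    have := (tendsto_pow_gauss_atBot (n+1)).neg
    rw [neg_zero] at this
    exact this
  have h0 := integral_of_hasDerivAt_of_tendsto hderiv hint hbot htop
  rw [sub_zero] at h0
  have hsub := integral_sub (integrable_pow_gauss (n+2))
    ((integrable_pow_gauss n).const_mul ((n:ℝ)+1))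
  rw [hf'] at h0
  simp only at h0
  rw [integral_sub (integrable_pow_gauss (n+2))
    ((integrable_pow_gauss n).const_mul ((n:ℝ)+1)), integral_const_mul] at h0
  push_cast
  linarith

lemma J_zero : ∫ x : ℝ, x ^ 0 * Real.exp (-(1/2) * x ^ 2) = Real.sqrt (2 * π) := by
  simp only [pow_zero, one_mul]
  rw [integral_gaussian]
  rw [show π / (1/2) = 2 * π by ring]

lemma sqrt_two_pi_pos : 0 < Real.sqrt (2 * π) :=
  Real.sqrt_pos.2 (by positivity)

lemma J_two : ∫ x : ℝ, x ^ 2 * Real.exp (-(1/2) * x ^ 2) = Real.sqrt (2 * π) := by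
  have := J_rec 0
  rw [J_zero] at this
  simpa using this

lemma J_four : ∫ x : ℝ, x ^ 4 * Real.exp (-(1/2) * x ^ 2) = 3 * Real.sqrt (2 * π) := by
  have := J_rec 2
  rw [J_two] at this
  rw [show ((2:ℕ)+2) = 4 from rfl] at this
  rw [this]
  norm_num

lemma J_six : ∫ x : ℝ, x ^ 6 * Real.exp (-(1/2) * x ^ 2) = 15 * Real.sqrt (2 * π) := by
  have := J_rec 4
  rw [J_four] at this
  rw [show ((4:ℕ)+2) = 6 from rfl] at this
  rw [this]
  push_cast
  ring

lemma rho_eq (x : ℝ) :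
    gaussianPDFReal 0 1 x = (Real.sqrt (2 * π))⁻¹ * Real.exp (-(1/2) * x ^ 2) := by
  simp only [gaussianPDFReal, NNReal.coe_one, mul_one, sub_zero]
  ring_nf

lemma gauss_int (g : ℝ → ℝ) :
    ∫ x, g x ∂(gaussianReal 0 1)
      = ∫ x, gaussianPDFReal 0 1 x * g x := by
  rw [gaussianReal_of_var_ne_zero 0 one_ne_zero]
  have hmeas : Measurable fun x => Real.toNNReal (gaussianPDFReal 0 1 x) :=
    (measurable_gaussianPDFReal 0 1).real_toNNReal
  have hpdf : gaussianPDF 0 1 = fun x => ((Real.toNNReal (gaussianPDFReal 0 1 x) : ℝ≥0) : ℝ≥0∞) := by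
    funext x
    simp [gaussianPDF, ENNReal.ofReal]
  rw [hpdf, integral_withDensity_eq_integral_smul hmeas]
  congr 1
  funext x
  rw [NNReal.smul_def, smul_eq_mul, Real.coe_toNNReal _ (gaussianPDFReal_nonneg 0 1 x)]

lemma hInt_pow (n : ℕ) : Integrable fun x : ℝ => gaussianPDFReal 0 1 x * x ^ n := by
  have heq : (fun x : ℝ => gaussianPDFReal 0 1 x * x ^ n)
      = fun x => (Real.sqrt (2*π))⁻¹ * (x ^ n * Real.exp (-(1/2) * x ^ 2)) := by
    funext x; rw [rho_eq]; ring
  rw [heq]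
  exact (integrable_pow_gauss n).const_mul _

lemma gauss_moment (n : ℕ) (r : ℝ)
    (h : ∫ x : ℝ, x ^ n * Real.exp (-(1/2) * x ^ 2) = r * Real.sqrt (2*π)) :
    ∫ x : ℝ, gaussianPDFReal 0 1 x * x ^ n = r := by
  have heq : (fun x : ℝ => gaussianPDFReal 0 1 x * x ^ n)
      = fun x => (Real.sqrt (2*π))⁻¹ * (x ^ n * Real.exp (-(1/2) * x ^ 2)) := by
    funext x; rw [rho_eq]; ring
  rw [heq, integral_const_mul, h]
  field_simp

lemma key_bound (s : ℝ) :
    |(∫ x, Real.log (Real.cosh (s * x)) ∂(gaussianReal 0 1)) - (s^2/2 - s^4/4)| ≤ s^6/3 := by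
  rw [gauss_int]
  have v2 : ∫ x : ℝ, gaussianPDFReal 0 1 x * x ^ 2 = 1 :=
    gauss_moment 2 1 (by rw [J_two]; ring)
  have v4 : ∫ x : ℝ, gaussianPDFReal 0 1 x * x ^ 4 = 3 :=
    gauss_moment 4 3 J_four
  have v6 : ∫ x : ℝ, gaussianPDFReal 0 1 x * x ^ 6 = 15 :=
    gauss_moment 6 15 J_six
  have hloeq : (fun x : ℝ => gaussianPDFReal 0 1 x * ((s*x)^2/2 - (s*x)^4/12))
      = fun x => s^2/2 * (gaussianPDFReal 0 1 x * x^2) - s^4/12 * (gaussianPDFReal 0 1 x * x^4) := by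
    funext x; ring
  have hhieq : (fun x : ℝ => gaussianPDFReal 0 1 x * ((s*x)^2/2 - (s*x)^4/12 + (s*x)^6/45))
      = fun x => (s^2/2 * (gaussianPDFReal 0 1 x * x^2) - s^4/12 * (gaussianPDFReal 0 1 x * x^4))
          + s^6/45 * (gaussianPDFReal 0 1 x * x^6) := by
    funext x; ring
  have ilo : Integrable (fun x : ℝ => gaussianPDFReal 0 1 x * ((s*x)^2/2 - (s*x)^4/12)) := by
    rw [hloeq]
    exact ((hInt_pow 2).const_mul _).sub ((hInt_pow 4).const_mul _)
  have ihi : Integrable (fun x : ℝ =>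
      gaussianPDFReal 0 1 x * ((s*x)^2/2 - (s*x)^4/12 + (s*x)^6/45)) := by
    rw [hhieq]
    exact (((hInt_pow 2).const_mul _).sub ((hInt_pow 4).const_mul _)).add
      ((hInt_pow 6).const_mul _)
  have imid : Integrable (fun x : ℝ => gaussianPDFReal 0 1 x * Real.log (Real.cosh (s*x))) := by
    apply Integrable.mono ((hInt_pow 2).const_mul (s^2/2))
    · exact ((measurable_gaussianPDFReal 0 1).mul
        (Real.measurable_log.comp
          (Real.continuous_cosh.measurable.comp (measurable_id.const_mul s)))).aestronglyMeasurable
    · refine ae_of_all _ fun x => ?_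
      have h1 : 0 ≤ gaussianPDFReal 0 1 x := gaussianPDFReal_nonneg 0 1 x
      have h2 : 0 ≤ Real.log (Real.cosh (s*x)) := logcosh_nonneg _
      rw [Real.norm_eq_abs, Real.norm_eq_abs, abs_of_nonneg (mul_nonneg h1 h2),
        abs_of_nonneg (by positivity : (0:ℝ) ≤ s^2/2 * (gaussianPDFReal 0 1 x * x^2))]
      have h3 : Real.log (Real.cosh (s*x)) ≤ (s*x)^2/2 := logcosh_le_sq (s*x)
      calc gaussianPDFReal 0 1 x * Real.log (Real.cosh (s*x))
          ≤ gaussianPDFReal 0 1 x * ((s*x)^2/2) := mul_le_mul_of_nonneg_left h3 h1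
        _ = s^2/2 * (gaussianPDFReal 0 1 x * x^2) := by ring
  have hlo_val : ∫ x : ℝ, gaussianPDFReal 0 1 x * ((s*x)^2/2 - (s*x)^4/12)
      = s^2/2 - s^4/4 := by
    rw [hloeq, integral_sub ((hInt_pow 2).const_mul _) ((hInt_pow 4).const_mul _),
      integral_const_mul, integral_const_mul, v2, v4]
    ring
  have hhi_val : ∫ x : ℝ, gaussianPDFReal 0 1 x * ((s*x)^2/2 - (s*x)^4/12 + (s*x)^6/45)
      = s^2/2 - s^4/4 + s^6/3 := by
    have hsplit : (fun x : ℝ => gaussianPDFReal 0 1 x * ((s*x)^2/2 - (s*x)^4/12 + (s*x)^6/45))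
        = (fun x : ℝ => gaussianPDFReal 0 1 x * ((s*x)^2/2 - (s*x)^4/12))
          + fun x : ℝ => s^6/45 * (gaussianPDFReal 0 1 x * x^6) := by
      funext x
      rw [Pi.add_apply]
      ring
    rw [hsplit, integral_add' ilo ((hInt_pow 6).const_mul _), hlo_val, integral_const_mul, v6]
    ring
  have hlow : ∫ x : ℝ, gaussianPDFReal 0 1 x * ((s*x)^2/2 - (s*x)^4/12)
      ≤ ∫ x : ℝ, gaussianPDFReal 0 1 x * Real.log (Real.cosh (s*x)) :=
    integral_mono ilo imid fun x =>
      mul_le_mul_of_nonneg_left (logcosh_lb (s*x)) (gaussianPDFReal_nonneg 0 1 x)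
  have hhigh : ∫ x : ℝ, gaussianPDFReal 0 1 x * Real.log (Real.cosh (s*x))
      ≤ ∫ x : ℝ, gaussianPDFReal 0 1 x * ((s*x)^2/2 - (s*x)^4/12 + (s*x)^6/45) :=
    integral_mono imid ihi fun x =>
      mul_le_mul_of_nonneg_left (logcosh_ub (s*x)) (gaussianPDFReal_nonneg 0 1 x)
  rw [hlo_val] at hlow
  rw [hhi_val] at hhigh
  rw [abs_le]
  constructor <;> [linarith; linarith]

/-- For `p ≥ 3`, `C > 0`, `β > 0`, `ξ₀ r = r²/2 + (C r)^p/p` and the RS functional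
`F_RS(q,β) = E[log cosh(β √(ξ₀'(q)) Z)] + (β²/2)(ξ₀(1) - ξ₀(q) - (1-q) ξ₀'(q))`,
one has `F_RS(0,β) = (β²/2) ξ₀(1)` and, as `q → 0⁺`,
`F_RS(q,β) - F_RS(0,β) = (β²/4)(1-β²) q² + o(q²)`. -/
theorem stmt_7 (p : ℕ) (hp : 3 ≤ p) (C β : ℝ) (hC : 0 < C) (hβ : 0 < β) :
    let ξ₀ : ℝ → ℝ := fun r => r ^ 2 / 2 + (C * r) ^ p / p
    let F : ℝ → ℝ := fun q =>
      (∫ x, Real.log (Real.cosh (β * Real.sqrt (deriv ξ₀ q) * x)) ∂(gaussianReal 0 1))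
        + β ^ 2 / 2 * (ξ₀ 1 - ξ₀ q - (1 - q) * deriv ξ₀ q)
    F 0 = β ^ 2 / 2 * ξ₀ 1 ∧
      Tendsto (fun q : ℝ =>
          (F q - β ^ 2 / 2 * ξ₀ 1 - β ^ 2 / 4 * (1 - β ^ 2) * q ^ 2) / q ^ 2)
        (nhdsWithin 0 (Set.Ioi 0)) (nhds 0) := by
  intro ξ₀ F
  obtain ⟨n, rfl⟩ : ∃ n, p = n + 3 := ⟨p - 3, by omega⟩
  set K := C ^ (n + 3) with hK
  have hKpos : 0 < K := pow_pos hC _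
  have hn3 : ((n : ℝ) + 3) ≠ 0 := by positivity
  have hxi_deriv : ∀ q : ℝ, deriv ξ₀ q = q + K * q ^ (n + 2) := by
    intro q
    have ha : HasDerivAt (fun r : ℝ => r ^ 2 / 2) q q := by
      simpa using (hasDerivAt_pow 2 q).div_const 2
    have hin : HasDerivAt (fun r : ℝ => C * r) C q := by
      simpa using (hasDerivAt_id q).const_mul C
    have hb : HasDerivAt (fun r : ℝ => (C * r) ^ (n + 3) / ((n + 3 : ℕ) : ℝ))
        (K * q ^ (n + 2)) q := by
      have h1 := ((hasDerivAt_pow (n + 3) (C * q)).comp q hin).div_const ((n + 3 : ℕ) : ℝ)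
      refine h1.congr_deriv ?_
      have : (C * q) ^ (n + 3 - 1) = C ^ (n + 2) * q ^ (n + 2) := by
        rw [show n + 3 - 1 = n + 2 from rfl, mul_pow]
      rw [this]
      push_cast
      field_simp [hK]
      ring
    have h := ha.add hb
    have hxi : ξ₀ = fun r => r ^ 2 / 2 + (C * r) ^ (n + 3) / ((n + 3 : ℕ) : ℝ) := rfl
    rw [hxi]
    exact h.deriv
  have hd0 : deriv ξ₀ 0 = 0 := by
    rw [hxi_deriv]
    simp
  have hxi0 : ξ₀ 0 = 0 := by
    show (0:ℝ) ^ 2 / 2 + (C * 0) ^ (n + 3) / ((n + 3 : ℕ) : ℝ) = 0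
    simp
  have hF0 : F 0 = β ^ 2 / 2 * ξ₀ 1 := by
    show (∫ x, Real.log (Real.cosh (β * Real.sqrt (deriv ξ₀ 0) * x)) ∂(gaussianReal 0 1))
        + β ^ 2 / 2 * (ξ₀ 1 - ξ₀ 0 - (1 - 0) * deriv ξ₀ 0) = β ^ 2 / 2 * ξ₀ 1
    rw [hd0, hxi0]
    simp
  refine ⟨hF0, ?_⟩
  -- the quotient limit
  set Q : ℝ → ℝ := fun q =>
    (β ^ 2 * K / 2 - β ^ 2 * K / (2 * ((n : ℝ) + 3)) - β ^ 4 * K / 2) * q ^ n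
      - β ^ 4 * K ^ 2 / 4 * q ^ (2 * n + 1) with hQ
  set A : ℝ → ℝ := fun q =>
    β ^ 2 * (q + K * q ^ (n + 2)) / 2 - (β ^ 2 * (q + K * q ^ (n + 2))) ^ 2 / 4 with hA
  set I : ℝ → ℝ := fun q =>
    ∫ x, Real.log (Real.cosh (β * Real.sqrt (q + K * q ^ (n + 2)) * x)) ∂(gaussianReal 0 1)
    with hI
  have hGbound : ∀ q : ℝ, 0 ≤ q →
      |I q - A q| ≤ (β ^ 2 * (q + K * q ^ (n + 2))) ^ 3 / 3 := by
    intro q hq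
    have hD : 0 ≤ q + K * q ^ (n + 2) := by positivity
    have hs2 : (β * Real.sqrt (q + K * q ^ (n + 2))) ^ 2 = β ^ 2 * (q + K * q ^ (n + 2)) := by
      rw [mul_pow, Real.sq_sqrt hD]
    have h := key_bound (β * Real.sqrt (q + K * q ^ (n + 2)))
    have h4 : (β * Real.sqrt (q + K * q ^ (n + 2))) ^ 4
        = (β ^ 2 * (q + K * q ^ (n + 2))) ^ 2 := by rw [← hs2]; ring
    have h6 : (β * Real.sqrt (q + K * q ^ (n + 2))) ^ 6
        = (β ^ 2 * (q + K * q ^ (n + 2))) ^ 3 := by rw [← hs2]; ring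
    rw [hs2, h4, h6] at h
    exact h
  have hIdent : ∀ q ∈ Set.Ioi (0:ℝ),
      (I q - A q) / q ^ 2 + q * Q q
        = (F q - β ^ 2 / 2 * ξ₀ 1 - β ^ 2 / 4 * (1 - β ^ 2) * q ^ 2) / q ^ 2 := by
    intro q hq
    have hq0 : (q:ℝ) ≠ 0 := ne_of_gt hq
    have hFq : F q = I q + β ^ 2 / 2 * (ξ₀ 1 - ξ₀ q - (1 - q) * (q + K * q ^ (n + 2))) := by
      show (∫ x, Real.log (Real.cosh (β * Real.sqrt (deriv ξ₀ q) * x)) ∂(gaussianReal 0 1))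
          + β ^ 2 / 2 * (ξ₀ 1 - ξ₀ q - (1 - q) * deriv ξ₀ q) = _
      rw [hxi_deriv q]
    rw [hFq]
    have hxiq : ξ₀ q = q ^ 2 / 2 + K * q ^ (n + 3) / ((n : ℝ) + 3) := by
      show q ^ 2 / 2 + (C * q) ^ (n + 3) / ((n + 3 : ℕ) : ℝ) = _
      rw [mul_pow]
      push_cast
      rfl
    rw [hxiq, hA, hQ]
    field_simp
    ring
  have hQlim : Tendsto (fun q : ℝ => q * Q q) (nhdsWithin 0 (Set.Ioi 0)) (nhds 0) := by
    have hcont : Continuous fun q : ℝ => q * Q q := by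
      apply continuous_id.mul
      exact (continuous_const.mul (continuous_pow n)).sub
        (continuous_const.mul (continuous_pow (2 * n + 1)))
    have := hcont.tendsto 0
    rw [zero_mul] at this
    exact this.mono_left nhdsWithin_le_nhds
  have hGlim : Tendsto (fun q : ℝ => (I q - A q) / q ^ 2)
      (nhdsWithin 0 (Set.Ioi 0)) (nhds 0) := by
    apply squeeze_zero_norm' (a := fun q : ℝ => β ^ 6 * (1 + K) ^ 3 / 3 * q)
    · filter_upwards [Ioo_mem_nhdsGT_of_mem
        (Set.mem_Ico.2 ⟨le_refl (0:ℝ), zero_lt_one⟩)] with q hq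
      obtain ⟨hq0, hq1⟩ := hq
      have hD : 0 ≤ q + K * q ^ (n + 2) := by positivity
      have hDle : q + K * q ^ (n + 2) ≤ (1 + K) * q := by
        have : q ^ (n + 2) ≤ q ^ 1 := pow_le_pow_of_le_one hq0.le hq1.le (by omega)
        rw [pow_one] at this
        nlinarith
      have hb := hGbound q hq0.le
      have h3 : (β ^ 2 * (q + K * q ^ (n + 2))) ^ 3 ≤ β ^ 6 * (1 + K) ^ 3 * q ^ 3 := by
        have h1 : β ^ 2 * (q + K * q ^ (n + 2)) ≤ β ^ 2 * ((1 + K) * q) :=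
          mul_le_mul_of_nonneg_left hDle (by positivity)
        have h2 : 0 ≤ β ^ 2 * (q + K * q ^ (n + 2)) := by positivity
        calc (β ^ 2 * (q + K * q ^ (n + 2))) ^ 3 ≤ (β ^ 2 * ((1 + K) * q)) ^ 3 :=
              pow_le_pow_left₀ h2 h1 3
          _ = β ^ 6 * (1 + K) ^ 3 * q ^ 3 := by ring
      rw [norm_div, Real.norm_eq_abs, Real.norm_eq_abs, abs_of_nonneg (by positivity : (0:ℝ) ≤ q ^ 2)]
      rw [div_le_iff₀ (by positivity : (0:ℝ) < q ^ 2)]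
      calc |I q - A q| ≤ (β ^ 2 * (q + K * q ^ (n + 2))) ^ 3 / 3 := hb
        _ ≤ β ^ 6 * (1 + K) ^ 3 * q ^ 3 / 3 := by linarith
        _ = β ^ 6 * (1 + K) ^ 3 / 3 * q * q ^ 2 := by ring
    · have hcont : Continuous fun q : ℝ => β ^ 6 * (1 + K) ^ 3 / 3 * q :=
        continuous_const.mul continuous_id
      have := hcont.tendsto 0
      rw [mul_zero] at this
      exact this.mono_left nhdsWithin_le_nhds
  have hsum := hGlim.add hQlim
  rw [add_zero] at hsum
  refine hsum.congr' ?_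
  filter_upwards [self_mem_nhdsWithin] with q hq
  exact hIdent q hq
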